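/- arXiv:2404.07210 — 3 statements merged into one kernel-verified Lean document; each statement's English description precedes it below -/
import Mathlib

section
/- Let 2 ≤ p < ∞, let (Ω, μ) be a probability space, let D_N = {φ_1, …, φ_N} ⊂ C(Ω) and suppose D_N satisfies the 2v-term Nikol'skii inequality: ‖g‖_{L_p(μ)} ≤ H ‖g‖_{L_2(μ)} for all g ∈ Σ_{2v}(D_N). Suppose ξ = {ξ^1, …, ξ^m} ⊆ Ω provides the one-sided L_2-universal discretization ‖g‖_{L_2(μ)} ≤ D ((1/m) ∑_j |g(ξ^j)|²)^{1/2} for all g ∈ Σ_{2v}(D_N). Let f ∈ C(Ω) and let B be any element of Σ_v(D_N) achieving the best v-term approximation of f in the discrete norm L_2(ξ), i.e., ‖f − B‖_{L_2(μ_m)} = σ_v(f, D_N)_{L_2(μ_m)}. Then ‖f − B‖_{L_p(Ω,μ)} ≤ (2DH + 1) σ_v(f, D_N)_∞, where σ_v(f, D_N)_∞ = inf_{g ∈ Σ_v(D_N)} ‖f − g‖_∞. -/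
open MeasureTheory Finset

lemma disc_tri {m : ℕ} (u w : Fin m → ℂ) :
    Real.sqrt ((1 / m) * ∑ j, ‖u j + w j‖ ^ 2) ≤
      Real.sqrt ((1 / m) * ∑ j, ‖u j‖ ^ 2) +
      Real.sqrt ((1 / m) * ∑ j, ‖w j‖ ^ 2) := by
  have hmn : (0:ℝ) ≤ 1 / m := by positivity
  rw [Real.sqrt_mul hmn, Real.sqrt_mul hmn, Real.sqrt_mul hmn, ← mul_add]
  apply mul_le_mul_of_nonneg_left _ (Real.sqrt_nonneg _)
  have h := norm_add_le (WithLp.toLp 2 u : EuclideanSpace ℂ (Fin m)) (WithLp.toLp 2 w)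
  rw [← WithLp.toLp_add] at h
  simp only [EuclideanSpace.norm_eq, PiLp.toLp_apply, Pi.add_apply] at h
  exact h


/-- Theorem 3.3 of [VT203]: if `D_N ⊂ C(Ω)` satisfies the `2v`-term Nikol'skii inequality
`NI(2,p,H,2v)` and the point set `ξ` provides the one-sided `L₂`-universal discretization
with constant `D` for `Σ_{2v}(D_N)`, then for any continuous `f` a best `v`-term
approximant `B` of `f` in the discrete norm `L₂(ξ)` satisfies
`‖f - B‖_{L_p(μ)} ≤ (2DH+1) σ_v(f, D_N)_∞`. -/
theorem best_discrete_approx_recovery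
    {Ω : Type*} [TopologicalSpace Ω] [CompactSpace Ω] [Nonempty Ω]
    [MeasurableSpace Ω] [BorelSpace Ω] (μ : Measure Ω) [IsProbabilityMeasure μ]
    (p : ℝ) (hp2 : 2 ≤ p) (N v m : ℕ) (hm : 1 ≤ m) (hvN : 2 * v ≤ N)
    (φ : Fin N → Ω → ℂ) (hφ : ∀ j, Continuous (φ j))
    (Sv : ℕ → Set (Ω → ℂ))
    (hSv : ∀ u, Sv u = {g | ∃ Q : Finset (Fin N), ∃ c : Fin N → ℂ,
      Q.card ≤ u ∧ g = fun x => ∑ j ∈ Q, c j * φ j x})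
    (H D : ℝ) (hH : 0 ≤ H) (hD : 0 ≤ D)
    (hNik : ∀ g ∈ Sv (2 * v),
      eLpNorm g (ENNReal.ofReal p) μ ≤ ENNReal.ofReal H * eLpNorm g 2 μ)
    (ξ : Fin m → Ω)
    (hdisc : ∀ g ∈ Sv (2 * v),
      eLpNorm g 2 μ ≤ ENNReal.ofReal
        (D * Real.sqrt ((1 / m) * ∑ j, ‖g (ξ j)‖ ^ 2)))
    (f : Ω → ℂ) (hf : Continuous f)
    (B : Ω → ℂ) (hB : B ∈ Sv v)
    (hbest : ∀ g ∈ Sv v,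
      Real.sqrt ((1 / m) * ∑ j, ‖f (ξ j) - B (ξ j)‖ ^ 2) ≤
        Real.sqrt ((1 / m) * ∑ j, ‖f (ξ j) - g (ξ j)‖ ^ 2)) :
    eLpNorm (f - B) (ENNReal.ofReal p) μ ≤
      ENNReal.ofReal ((2 * D * H + 1) *
        sInf {r : ℝ | ∃ g ∈ Sv v, r = ⨆ x, ‖f x - g x‖}) := by
  set S := {r : ℝ | ∃ g ∈ Sv v, r = ⨆ x, ‖f x - g x‖} with hSdef
  have hcontSv : ∀ u : ℕ, ∀ g ∈ Sv u, Continuous g := by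
    intro u g hg
    rw [hSv] at hg
    obtain ⟨Q, c, _, rfl⟩ := hg
    exact continuous_finset_sum _ fun j _ => continuous_const.mul (hφ j)
  have hBc : Continuous B := hcontSv v B hB
  have hm0 : (0:ℝ) < m := by exact_mod_cast Nat.lt_of_lt_of_le Nat.zero_lt_one hm
  -- key estimate
  have key : ∀ r ∈ S, eLpNorm (f - B) (ENNReal.ofReal p) μ ≤
      ENNReal.ofReal ((2 * D * H + 1) * r) := by
    rintro r ⟨g, hg, rfl⟩
    have hgc : Continuous g := hcontSv v g hg
    set r := ⨆ x, ‖f x - g x‖ with hrdef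
    have hbdd : BddAbove (Set.range fun x => ‖f x - g x‖) := by
      rw [← Set.image_univ]
      exact isCompact_univ.bddAbove_image
        ((continuous_norm.comp (hf.sub hgc)).continuousOn)
    have hle : ∀ x, ‖f x - g x‖ ≤ r := fun x => le_ciSup hbdd x
    have hr0 : 0 ≤ r :=
      le_trans (norm_nonneg _) (hle (Classical.arbitrary Ω))
    -- membership of g - B in Sv (2v)
    have hgB : (fun x => g x - B x) ∈ Sv (2 * v) := by
      rw [hSv] at hg hB ⊢
      obtain ⟨Q1, c1, hQ1, rfl⟩ := hg
      obtain ⟨Q2, c2, hQ2, rfl⟩ := hB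
      refine ⟨Q1 ∪ Q2, fun j => (if j ∈ Q1 then c1 j else 0) -
        (if j ∈ Q2 then c2 j else 0), ?_, ?_⟩
      · calc (Q1 ∪ Q2).card ≤ Q1.card + Q2.card := Finset.card_union_le _ _
          _ ≤ 2 * v := by omega
      · funext x
        simp only [sub_mul, ite_mul, zero_mul, Finset.sum_sub_distrib,
          Finset.sum_ite_mem, Finset.union_inter_cancel_left,
          Finset.union_inter_cancel_right]
    -- discrete bounds
    have hd1 : Real.sqrt ((1 / m) * ∑ j, ‖f (ξ j) - g (ξ j)‖ ^ 2) ≤ r := by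
      rw [show (r:ℝ) = Real.sqrt (r ^ 2) from (Real.sqrt_sq hr0).symm]
      apply Real.sqrt_le_sqrt
      have hsum : ∑ j, ‖f (ξ j) - g (ξ j)‖ ^ 2 ≤ (m:ℝ) * r ^ 2 := by
        calc ∑ j, ‖f (ξ j) - g (ξ j)‖ ^ 2
            ≤ ∑ _j : Fin m, r ^ 2 :=
              Finset.sum_le_sum fun j _ =>
                pow_le_pow_left₀ (norm_nonneg _) (hle _) 2
          _ = (m:ℝ) * r ^ 2 := by simp [Finset.sum_const, mul_comm]
      calc (1 / m : ℝ) * ∑ j, ‖f (ξ j) - g (ξ j)‖ ^ 2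
          ≤ (1 / m) * ((m:ℝ) * r ^ 2) := by
            apply mul_le_mul_of_nonneg_left hsum (by positivity)
        _ = r ^ 2 := by field_simp
    have hd2 : Real.sqrt ((1 / m) * ∑ j, ‖g (ξ j) - B (ξ j)‖ ^ 2) ≤
        2 * r := by
      have tri := disc_tri (fun j => g (ξ j) - f (ξ j)) (fun j => f (ξ j) - B (ξ j))
      simp only [sub_add_sub_cancel] at tri
      have hcg : ∑ j, ‖g (ξ j) - f (ξ j)‖ ^ 2 =
          ∑ j, ‖f (ξ j) - g (ξ j)‖ ^ 2 :=
        Finset.sum_congr rfl fun j _ => by rw [norm_sub_rev]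
      rw [hcg] at tri
      calc Real.sqrt ((1 / m) * ∑ j, ‖g (ξ j) - B (ξ j)‖ ^ 2)
          ≤ Real.sqrt ((1 / m) * ∑ j, ‖f (ξ j) - g (ξ j)‖ ^ 2) +
            Real.sqrt ((1 / m) * ∑ j, ‖f (ξ j) - B (ξ j)‖ ^ 2) := tri
        _ ≤ Real.sqrt ((1 / m) * ∑ j, ‖f (ξ j) - g (ξ j)‖ ^ 2) +
            Real.sqrt ((1 / m) * ∑ j, ‖f (ξ j) - g (ξ j)‖ ^ 2) :=
            add_le_add_right (hbest g hg) _
        _ ≤ r + r := add_le_add hd1 hd1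
        _ = 2 * r := by ring
    -- eLpNorm chain
    have hp1 : (1:ENNReal) ≤ ENNReal.ofReal p := by
      rw [← ENNReal.ofReal_one]
      exact ENNReal.ofReal_le_ofReal (by linarith)
    have hms1 : AEStronglyMeasurable (fun x => f x - g x) μ :=
      (hf.sub hgc).aestronglyMeasurable
    have hms2 : AEStronglyMeasurable (fun x => g x - B x) μ :=
      (hgc.sub hBc).aestronglyMeasurable
    have hsplit : f - B = (fun x => f x - g x) + (fun x => g x - B x) := by
      funext x
      simp only [Pi.sub_apply, Pi.add_apply]
      ring
    have htri := eLpNorm_add_le hms1 hms2 hp1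
    rw [← hsplit] at htri
    have h1 : eLpNorm (fun x => f x - g x) (ENNReal.ofReal p) μ ≤ ENNReal.ofReal r := by
      have hb := eLpNorm_le_of_ae_bound (μ := μ) (p := ENNReal.ofReal p)
        (f := fun x => f x - g x) (C := r)
        (ae_of_all _ fun x => by simpa using hle x)
      simpa [measure_univ, ENNReal.one_rpow] using hb
    have h2 : eLpNorm (fun x => g x - B x) (ENNReal.ofReal p) μ ≤
        ENNReal.ofReal (H * (D * (2 * r))) := by
      calc eLpNorm (fun x => g x - B x) (ENNReal.ofReal p) μ
          ≤ ENNReal.ofReal H * eLpNorm (fun x => g x - B x) 2 μ := hNik _ hgB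
        _ ≤ ENNReal.ofReal H * ENNReal.ofReal
            (D * Real.sqrt ((1 / m) * ∑ j, ‖g (ξ j) - B (ξ j)‖ ^ 2)) :=
            mul_le_mul_right (hdisc _ hgB) _
        _ ≤ ENNReal.ofReal H * ENNReal.ofReal (D * (2 * r)) :=
            mul_le_mul_right (ENNReal.ofReal_le_ofReal
              (mul_le_mul_of_nonneg_left hd2 hD)) _
        _ = ENNReal.ofReal (H * (D * (2 * r))) := (ENNReal.ofReal_mul hH).symm
    calc eLpNorm (f - B) (ENNReal.ofReal p) μ
        ≤ ENNReal.ofReal r + ENNReal.ofReal (H * (D * (2 * r))) :=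
          le_trans htri (add_le_add h1 h2)
      _ = ENNReal.ofReal (r + H * (D * (2 * r))) :=
          (ENNReal.ofReal_add hr0 (by positivity)).symm
      _ = ENNReal.ofReal ((2 * D * H + 1) * r) := by
          congr 1
          ring
  -- conclude via sInf
  have hSne : S.Nonempty := by
    refine ⟨_, (fun x => ∑ j ∈ (∅ : Finset (Fin N)), (0:ℂ) * φ j x), ?_, rfl⟩
    rw [hSv]
    exact ⟨∅, fun _ => 0, by simp⟩
  have hSbdd : BddBelow S := by
    refine ⟨0, ?_⟩
    rintro r ⟨g, hg, rfl⟩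
    exact Real.iSup_nonneg fun x => norm_nonneg _
  have hc : (0:ℝ) ≤ 2 * D * H + 1 := by positivity
  have hmonoF : Monotone fun r : ℝ => ENNReal.ofReal ((2 * D * H + 1) * r) :=
    fun a b hab => ENNReal.ofReal_le_ofReal (mul_le_mul_of_nonneg_left hab hc)
  have hcontF : Continuous fun r : ℝ => ENNReal.ofReal ((2 * D * H + 1) * r) :=
    ENNReal.continuous_ofReal.comp (continuous_const.mul continuous_id)
  have heq : ENNReal.ofReal ((2 * D * H + 1) * sInf S) =
      sInf ((fun r => ENNReal.ofReal ((2 * D * H + 1) * r)) '' S) :=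
    Monotone.map_csInf_of_continuousAt hcontF.continuousAt hmonoF hSne hSbdd
  rw [heq]
  apply le_sInf
  rintro b ⟨r, hr, rfl⟩
  exact key r hr
end

section
/- Let X be a Banach space whose modulus of smoothness satisfies η(X, w) ≤ γ w^q for some 1 < q ≤ 2 and γ > 0, over the complex scalars. Let D be a system of elements of X with ‖g‖_X ≤ 1 for all g ∈ D, and let A_1(D) be the set of f = ∑_i a_i g_i with g_i ∈ D and ∑_i |a_i| ≤ 1. Then there is a constant C(q, γ) such that for all v ∈ ℕ, sup_{f ∈ A_1(D)} σ_v(f, D)_X ≤ C(q, γ) (v+1)^{1/q − 1}, where σ_v(f, D)_X is the best v-term approximation error of f with respect to D in X. -/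
open Finset

lemma smooth_bound {X : Type} [NormedAddCommGroup X] [NormedSpace ℂ X]
    {q γ : ℝ} (hq0 : 0 < q) (hγ : 0 < γ)
    (Sm : ∀ w : ℝ, 0 < w → ∀ x y : X, ‖x‖ = 1 → ‖y‖ = 1 →
      (‖x + w • y‖ + ‖x - w • y‖) / 2 - 1 ≤ γ * w ^ q)
    (x z : X) (hx : x ≠ 0) (F : X →L[ℂ] ℂ) (hF : ‖F‖ ≤ 1) (hFx : F x = (‖x‖ : ℂ)) :
    ‖x + z‖ ≤ ‖x‖ + (F z).re + 2 * γ * ‖z‖ ^ q * ‖x‖ ^ (1 - q) := by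
  by_cases hz : z = 0
  · subst hz
    simp [Real.zero_rpow hq0.ne']
  · set a := ‖x‖ with ha_def
    set b := ‖z‖ with hb_def
    have ha : 0 < a := norm_pos_iff.2 hx
    have hb : 0 < b := norm_pos_iff.2 hz
    have h1 : ‖a⁻¹ • x‖ = 1 := by
      rw [norm_smul, Real.norm_eq_abs, abs_inv, abs_of_pos ha, ← ha_def, inv_mul_cancel₀ ha.ne']
    have h2 : ‖b⁻¹ • z‖ = 1 := by
      rw [norm_smul, Real.norm_eq_abs, abs_inv, abs_of_pos hb, ← hb_def, inv_mul_cancel₀ hb.ne']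
    have key := Sm (b / a) (div_pos hb ha) (a⁻¹ • x) (b⁻¹ • z) h1 h2
    have e1 : (b / a) • (b⁻¹ • z) = a⁻¹ • z := by
      rw [smul_smul]; congr 1; field_simp
    rw [e1] at key
    have e2 : ‖a⁻¹ • x + a⁻¹ • z‖ = a⁻¹ * ‖x + z‖ := by
      rw [← smul_add, norm_smul, Real.norm_eq_abs, abs_inv, abs_of_pos ha]
    have e3 : ‖a⁻¹ • x - a⁻¹ • z‖ = a⁻¹ * ‖x - z‖ := by
      rw [← smul_sub, norm_smul, Real.norm_eq_abs, abs_inv, abs_of_pos ha]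
    rw [e2, e3] at key
    have e4 : a * ((b / a) ^ q) = b ^ q * a ^ (1 - q) := by
      rw [Real.div_rpow hb.le ha.le, Real.rpow_sub ha, Real.rpow_one]
      field_simp
    have key2 : ‖x + z‖ + ‖x - z‖ ≤ 2 * a + 2 * γ * (b ^ q * a ^ (1 - q)) := by
      have hmul := mul_le_mul_of_nonneg_left key (le_of_lt (by positivity : (0:ℝ) < 2 * a))
      have l1 : 2 * a * ((a⁻¹ * ‖x + z‖ + a⁻¹ * ‖x - z‖) / 2 - 1) = ‖x + z‖ + ‖x - z‖ - 2 * a := by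
        field_simp
      have l2 : 2 * a * (γ * (b / a) ^ q) = 2 * γ * (a * (b / a) ^ q) := by ring
      rw [← e4]
      linarith [hmul, l1, l2]
    have hre : a - (F z).re ≤ ‖x - z‖ := by
      have h5 : (F (x - z)).re ≤ ‖x - z‖ := by
        calc (F (x - z)).re ≤ ‖F (x - z)‖ := Complex.re_le_norm _
          _ ≤ ‖F‖ * ‖x - z‖ := F.le_opNorm _
          _ ≤ 1 * ‖x - z‖ := by
              exact mul_le_mul_of_nonneg_right hF (norm_nonneg _)
          _ = ‖x - z‖ := one_mul _
      have h6 : (F (x - z)).re = a - (F z).re := by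
        rw [map_sub, hFx]
        simp
      linarith
    nlinarith [key2, hre]

lemma helperA_aux {t β : ℝ} (ht : 2 ≤ t) (hβ0 : 0 < β) (hβ1 : β ≤ 1) :
    (t - 1) ^ (-β) ≤ t ^ (-β) * (1 + 2 / t) := by
  have ht0 : (0:ℝ) < t := by linarith
  have ht1 : (0:ℝ) < t - 1 := by linarith
  have h1 : (t - 1) ^ (-β) = t ^ (-β) * ((t - 1) / t) ^ (-β) := by
    rw [Real.div_rpow ht1.le ht0.le]
    field_simp
  have hbase0 : (0:ℝ) < (t - 1) / t := by positivity
  have hbase1 : (t - 1) / t ≤ 1 := by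
    rw [div_le_one ht0]; linarith
  have h2 : ((t - 1) / t) ^ (-β) ≤ ((t - 1) / t) ^ (-(1:ℝ)) :=
    Real.rpow_le_rpow_of_exponent_ge hbase0 hbase1 (by linarith)
  have h3 : ((t - 1) / t) ^ (-(1:ℝ)) = t / (t - 1) := by
    rw [Real.rpow_neg_one, inv_div]
  have h4 : t / (t - 1) ≤ 1 + 2 / t := by
    rw [div_le_iff₀ ht1]
    have : (1 + 2 / t) * (t - 1) = t + 1 - 2/t := by field_simp; ring
    rw [this]
    have h5 : 2 / t ≤ 1 := by rw [div_le_one ht0]; linarith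
    linarith
  calc (t - 1) ^ (-β) = t ^ (-β) * ((t - 1) / t) ^ (-β) := h1
    _ ≤ t ^ (-β) * (1 + 2 / t) := by
        apply mul_le_mul_of_nonneg_left _ (Real.rpow_nonneg ht0.le _)
        linarith [h2, h3 ▸ h2]

-- coercion of real smul
lemma coe_smul_aux {X : Type} [NormedAddCommGroup X] [NormedSpace ℂ X] (r : ℝ) (x : X) :
    ((r : ℂ)) • x = r • x := by
  rw [show ((r:ℂ)) = r • (1:ℂ) by simp [Complex.real_smul], smul_assoc, one_smul]

-- selection lemma
lemma selection_aux {X : Type} [NormedAddCommGroup X] [NormedSpace ℂ X]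
    (F : X →L[ℂ] ℂ) (f : X) (g : ℕ → X) (aC : ℕ → ℂ)
    (hg1 : ∀ i, ‖g i‖ ≤ 1)
    (hsum : Summable fun i => ‖aC i‖)
    (hsum1 : (∑' i, ‖aC i‖) ≤ 1)
    (hf : HasSum (fun i => aC i • g i) f) (ε : ℝ) (hε : 0 < ε) (hr : ε < (F f).re) :
    ∃ (i : ℕ) (u : ℂ), ‖u‖ = 1 ∧ (F (f - u • g i)).re ≤ ε := by
  set r := (F f).re with hrdef
  have hFs : HasSum (fun i => aC i * F (g i)) (F f) := by
    have := hf.mapL F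
    simpa [map_smul, smul_eq_mul] using this
  have hFs' : HasSum (fun i => (aC i * F (g i)).re) r := by
    exact Complex.hasSum_re hFs
  have hkey : ∃ i, ‖aC i‖ * (r - ε) < (aC i * F (g i)).re := by
    by_contra hcon
    push_neg at hcon
    have hsum2 : Summable fun i => ‖aC i‖ * (r - ε) := hsum.mul_right _
    have h1 : r ≤ ∑' i, ‖aC i‖ * (r - ε) := by
      calc r = ∑' i, (aC i * F (g i)).re := hFs'.tsum_eq.symm
        _ ≤ ∑' i, ‖aC i‖ * (r - ε) := Summable.tsum_le_tsum hcon hFs'.summable hsum2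
    rw [tsum_mul_right] at h1
    have h2 : (∑' i, ‖aC i‖) * (r - ε) ≤ 1 * (r - ε) :=
      mul_le_mul_of_nonneg_right hsum1 (by linarith)
    linarith
  obtain ⟨i, hi⟩ := hkey
  have hane : aC i ≠ 0 := by
    intro h0
    rw [h0] at hi
    simp at hi
  set d := ‖aC i‖ with hd
  have hd0 : 0 < d := by
    simpa [hd] using norm_pos_iff.2 hane
  refine ⟨i, aC i / (d : ℂ), ?_, ?_⟩
  · rw [norm_div, Complex.norm_of_nonneg hd0.le, ← hd, div_self hd0.ne']
  · have hFσ : (F ((aC i / (d:ℂ)) • g i)).re = (aC i * F (g i)).re / d := by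
      rw [map_smul, smul_eq_mul, div_mul_eq_mul_div, Complex.div_ofReal_re]
    have h3 : r - ε < (aC i * F (g i)).re / d := by
      rw [lt_div_iff₀ hd0]
      calc (r - ε) * d = d * (r - ε) := by ring
        _ < (aC i * F (g i)).re := hi
    rw [map_sub]
    have : (F f - F ((aC i / (d:ℂ)) • g i)).re = r - (F ((aC i / (d:ℂ)) • g i)).re := by
      simp [hrdef]
    rw [this, hFσ]
    linarith
set_option maxHeartbeats 2000000 in
/-- Lemma: if a complex Banach space `X` has modulus of smoothness
`η(X,w) ≤ γ w^q`, `1 < q ≤ 2`, and `D` is a system with `‖g‖ ≤ 1` for `g ∈ D`, then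
there is `C(q,γ)` such that every `f ∈ A₁(D)` admits, for every `v ∈ ℕ`, a `v`-term
approximant with error at most `C(q,γ)(v+1)^{1/q-1}`, i.e.
`σ_v(A₁(D), D)_X ≤ C(q,γ)(v+1)^{1/q-1}`. -/
theorem vterm_approx_A1 (q γ : ℝ) (hq1 : 1 < q) (hq2 : q ≤ 2) (hγ : 0 < γ) :
    ∃ C : ℝ, 0 < C ∧
      ∀ (X : Type) (_ : NormedAddCommGroup X) (_ : NormedSpace ℂ X)
        (_ : CompleteSpace X),
        (∀ w : ℝ, 0 < w → ∀ x y : X, ‖x‖ = 1 → ‖y‖ = 1 →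
          (‖x + w • y‖ + ‖x - w • y‖) / 2 - 1 ≤ γ * w ^ q) →
        ∀ (D : Set X), (∀ g ∈ D, ‖g‖ ≤ 1) →
        ∀ (f : X) (g : ℕ → X) (aC : ℕ → ℂ), (∀ i, g i ∈ D) →
          (Summable fun i => ‖aC i‖) →
          (∑' i, ‖aC i‖) ≤ 1 →
          HasSum (fun i => aC i • g i) f →
        ∀ v : ℕ, ∃ (s : Finset ℕ) (c : ℕ → ℂ) (h : ℕ → X),
          s.card ≤ v ∧ (∀ i ∈ s, h i ∈ D) ∧
          ‖f - ∑ i ∈ s, c i • h i‖ ≤ C * ((v : ℝ) + 1) ^ (1 / q - 1) := by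
  have hq0 : (0:ℝ) < q := lt_trans one_pos hq1
  set β : ℝ := 1 - 1/q with hβ
  have hβ0 : 0 < β := by
    have : 1/q < 1 := by rw [div_lt_one hq0]; exact hq1
    rw [hβ]; linarith
  have hβ1 : β ≤ 1 := by
    have : 0 < 1/q := by positivity
    rw [hβ]; linarith
  set A : ℝ := 16 * (1 + 2*γ) ^ (1/q) with hA
  have hcoef1 : (1:ℝ) ≤ (1 + 2*γ) ^ (1/q) := by
    calc (1:ℝ) = 1 ^ (1/q) := (Real.one_rpow _).symm
      _ ≤ (1 + 2*γ) ^ (1/q) := Real.rpow_le_rpow (by norm_num) (by linarith) (by positivity)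
  have hA16 : (16:ℝ) ≤ A := by
    rw [hA]; nlinarith
  have hA0 : (0:ℝ) < A := by linarith
  have hAq : 2 * 16 ^ q * γ ≤ A ^ q := by
    rw [hA, Real.mul_rpow (by norm_num) (Real.rpow_nonneg (by linarith) _)]
    have h1 : ((1 + 2*γ) ^ (1/q)) ^ q = 1 + 2*γ := by
      rw [← Real.rpow_mul (by linarith : (0:ℝ) ≤ 1 + 2*γ)]
      rw [one_div, inv_mul_cancel₀ hq0.ne', Real.rpow_one]
    rw [h1]
    nlinarith [Real.rpow_pos_of_pos (by norm_num : (0:ℝ) < 16) q]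
  refine ⟨A, hA0, ?_⟩
  intro X _inst1 _inst2 _inst3 Sm D hD f g aC hgD hsum hsum1 hf v
  have hg1 : ∀ i, ‖g i‖ ≤ 1 := fun i => hD _ (hgD i)
  have hfnorm : ‖f‖ ≤ 1 := by
    have hs2 : Summable fun i => ‖aC i • g i‖ := by
      apply Summable.of_nonneg_of_le (fun i => norm_nonneg _) _ hsum
      intro i
      rw [norm_smul]
      calc ‖aC i‖ * ‖g i‖ ≤ ‖aC i‖ * 1 := by
            exact mul_le_mul_of_nonneg_left (hg1 i) (norm_nonneg _)
        _ = ‖aC i‖ := by rw [mul_one]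
    calc ‖f‖ = ‖∑' i, aC i • g i‖ := by rw [hf.tsum_eq]
      _ ≤ ∑' i, ‖aC i • g i‖ := norm_tsum_le_tsum_norm hs2
      _ ≤ ∑' i, ‖aC i‖ := by
          apply Summable.tsum_le_tsum _ hs2 hsum
          intro i
          rw [norm_smul]
          calc ‖aC i‖ * ‖g i‖ ≤ ‖aC i‖ * 1 := by
                exact mul_le_mul_of_nonneg_left (hg1 i) (norm_nonneg _)
            _ = ‖aC i‖ := by rw [mul_one]
      _ ≤ 1 := hsum1
  have key : ∀ m : ℕ, ∃ (s : Finset ℕ) (c : ℕ → ℂ),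
      s.card ≤ m ∧ ‖f - ∑ i ∈ s, c i • g i‖ ≤ 2 ∧
      ‖f - ∑ i ∈ s, c i • g i‖ ≤ A * ((m : ℝ) + 1) ^ (-β) := by
    intro m
    induction m with
    | zero =>
      refine ⟨∅, 0, le_refl _, ?_, ?_⟩
      · simpa using le_trans hfnorm (by norm_num)
      · have : ((0:ℕ):ℝ) + 1 = 1 := by norm_num
        rw [this, Real.one_rpow, mul_one]
        simpa using le_trans hfnorm (by linarith)
    | succ m ih =>
      obtain ⟨s, c, hcard, hE2, hEb⟩ := ih
      set p := ∑ i ∈ s, c i • g i with hp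
      set E := ‖f - p‖ with hEdef
      set t : ℝ := (m : ℝ) + 2 with ht
      have htm : ((m+1 : ℕ) : ℝ) + 1 = t := by push_cast; ring
      have ht2 : (2:ℝ) ≤ t := by
        have hm0 : (0:ℝ) ≤ (m:ℝ) := Nat.cast_nonneg m
        rw [ht]; linarith
      have ht0 : (0:ℝ) < t := by linarith
      by_cases hcase : E ≤ A * t ^ (-β)
      · exact ⟨s, c, le_trans hcard (Nat.le_succ m), hE2, by rw [htm]; exact hcase⟩
      · push_neg at hcase
        -- Case B : genuine greedy step
        have hP0 : (0:ℝ) < A * t ^ (-β) := by positivity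
        have hE0 : (0:ℝ) < E := lt_trans hP0 hcase
        have hx0 : f - p ≠ 0 := by
          intro h0
          rw [hEdef, h0, norm_zero] at hE0
          exact lt_irrefl _ hE0
        obtain ⟨F, hF1, hFx⟩ := exists_dual_vector ℂ (f - p) (norm_ne_zero_iff.2 hx0)
        set lam : ℝ := 4 / t with hlamdef
        set ε : ℝ := A * t ^ (-β) / 4 with hεdef
        have hε0 : 0 < ε := by positivity
        -- t is large : t > 8
        have ht8 : (8:ℝ) < t := by
          have h1 : A * t ^ (-β) < 2 := lt_of_lt_of_le hcase hE2
          have h2 : 16 * t ^ (-β) ≤ A * t ^ (-β) :=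
            mul_le_mul_of_nonneg_right hA16 (Real.rpow_nonneg ht0.le _)
          have h3 : t ^ (-β) < 1/8 := by linarith
          have htb0 : (0:ℝ) < t ^ β := Real.rpow_pos_of_pos ht0 β
          have h4 : (8:ℝ) < t ^ β := by
            have h3' : (t ^ β)⁻¹ < 1/8 := by rw [← Real.rpow_neg ht0.le]; exact h3
            have hmc : t ^ β * (t ^ β)⁻¹ = 1 := mul_inv_cancel₀ htb0.ne'
            nlinarith [h3', hmc, htb0]
          have h5 : t ^ β ≤ t := by
            calc t ^ β ≤ t ^ (1:ℝ) :=
                  Real.rpow_le_rpow_of_exponent_le (by linarith) hβ1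
              _ = t := Real.rpow_one t
          linarith
        have hlam0 : 0 < lam := by positivity
        have hlamhalf : lam < 1/2 := by
          rw [hlamdef, div_lt_iff₀ ht0]; linarith
        have h1lam : (0:ℝ) < 1 - lam := by linarith
        -- selection of σ
        have hσex : ∃ σ : X, ‖σ‖ ≤ 1 ∧ (F (f - σ)).re ≤ ε ∧
            (σ = 0 ∨ ∃ (i : ℕ) (u : ℂ), σ = u • g i) := by
          by_cases hrc : (F f).re ≤ ε
          · exact ⟨0, by simp, by simpa using hrc, Or.inl rfl⟩
          · push_neg at hrc
            obtain ⟨i, u, hu1, hu2⟩ :=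
              selection_aux F f g aC hg1 hsum hsum1 hf ε hε0 hrc
            refine ⟨u • g i, ?_, hu2, Or.inr ⟨i, u, rfl⟩⟩
            rw [norm_smul]
            calc ‖u‖ * ‖g i‖ = 1 * ‖g i‖ := by rw [hu1]
              _ ≤ 1 := by rw [one_mul]; exact hg1 i
        obtain ⟨σ, hσ1, hσε, hσform⟩ := hσex
        -- representation of the new approximant
        have hrep : ∃ (s' : Finset ℕ) (c' : ℕ → ℂ), s'.card ≤ m + 1 ∧
            ∑ j ∈ s', c' j • g j = (1 - lam) • p + lam • σ := by
          rcases hσform with h0 | ⟨i, u, hiu⟩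
          · refine ⟨s, fun j => ((1 - lam : ℝ) : ℂ) * c j, le_trans hcard (Nat.le_succ m), ?_⟩
            rw [h0, smul_zero, add_zero]
            rw [show ((1 - lam : ℝ) • p) = ((1 - lam : ℝ) : ℂ) • p from (coe_smul_aux _ _).symm]
            rw [hp, Finset.smul_sum]
            apply Finset.sum_congr rfl
            intro j _
            rw [smul_smul]
          · refine ⟨insert i s,
              fun j => (if j ∈ s then ((1 - lam : ℝ) : ℂ) * c j else 0) +
                (if j = i then ((lam : ℝ) : ℂ) * u else 0), ?_, ?_⟩
            · calc (insert i s).card ≤ s.card + 1 := Finset.card_insert_le i s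
                _ ≤ m + 1 := by omega
            · rw [show (∑ j ∈ insert i s,
                  ((if j ∈ s then ((1 - lam : ℝ) : ℂ) * c j else 0) +
                    (if j = i then ((lam : ℝ) : ℂ) * u else 0)) • g j) =
                  (∑ j ∈ insert i s, (if j ∈ s then ((1 - lam : ℝ) : ℂ) * c j else 0) • g j) +
                  (∑ j ∈ insert i s, (if j = i then ((lam : ℝ) : ℂ) * u else 0) • g j) by
                rw [← Finset.sum_add_distrib]
                apply Finset.sum_congr rfl
                intro j _
                rw [add_smul]]
              congr 1
              · rw [← Finset.sum_subset (Finset.subset_insert i s)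
                  (fun j _ hj => by simp [hj])]
                rw [show ((1 - lam : ℝ) • p) = ((1 - lam : ℝ) : ℂ) • p from (coe_smul_aux _ _).symm]
                rw [hp, Finset.smul_sum]
                apply Finset.sum_congr rfl
                intro j hj
                rw [if_pos hj, smul_smul]
              · rw [Finset.sum_eq_single_of_mem i (Finset.mem_insert_self i s)
                  (fun j _ hj => by simp [hj])]
                rw [if_pos rfl, hiu, mul_smul, coe_smul_aux]
        obtain ⟨s', c', hcard', hrepr⟩ := hrep
        have hfs2 : ‖f - σ‖ ≤ 2 := le_trans (norm_sub_le _ _) (by linarith)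
        have hdiff : f - ((1 - lam) • p + lam • σ) = (1 - lam) • (f - p) + lam • (f - σ) := by
          module
        refine ⟨s', c', hcard', ?_, ?_⟩ <;> rw [hrepr]
        · -- crude bound by 2
          rw [hdiff]
          calc ‖(1 - lam) • (f - p) + lam • (f - σ)‖
              ≤ ‖(1 - lam) • (f - p)‖ + ‖lam • (f - σ)‖ := norm_add_le _ _
            _ = (1 - lam) * ‖f - p‖ + lam * ‖f - σ‖ := by
                rw [norm_smul, norm_smul, Real.norm_eq_abs, Real.norm_eq_abs,
                  abs_of_pos h1lam, abs_of_pos hlam0]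
            _ ≤ (1 - lam) * 2 + lam * 2 := by
                have hE2' : ‖f - p‖ ≤ 2 := hE2
                have := mul_le_mul_of_nonneg_left hE2' h1lam.le
                have := mul_le_mul_of_nonneg_left hfs2 hlam0.le
                linarith
            _ = 2 := by ring
        · -- main estimate
          rw [htm]
          set w' : ℝ := lam / (1 - lam) with hw'
          have hw'0 : 0 ≤ w' := div_nonneg hlam0.le h1lam.le
          have hmulw : (1 - lam) * w' = lam := by
            rw [hw']; field_simp
          have hdiff2 : f - ((1 - lam) • p + lam • σ)
              = (1 - lam) • ((f - p) + w' • (f - σ)) := by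
            rw [hdiff, smul_add, smul_smul, hmulw]
          have hnorm_eq : ‖f - ((1 - lam) • p + lam • σ)‖
              = (1 - lam) * ‖(f - p) + w' • (f - σ)‖ := by
            rw [hdiff2, norm_smul, Real.norm_eq_abs, abs_of_pos h1lam]
          have hsb := smooth_bound hq0 hγ Sm (f - p) (w' • (f - σ)) hx0 F (le_of_eq hF1) hFx
          rw [← hEdef] at hsb
          set R : ℝ := (F (w' • (f - σ))).re with hR'
          set T : ℝ := 2 * γ * ‖w' • (f - σ)‖ ^ q * E ^ (1 - q) with hT'
          have hT0 : 0 ≤ T := by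
            rw [hT']
            have := Real.rpow_nonneg (norm_nonneg (w' • (f - σ))) q
            have := Real.rpow_nonneg hE0.le (1 - q)
            positivity
          -- functional term
          have hre : R ≤ w' * ε := by
            rw [hR', F.map_smul_of_tower, Complex.smul_re, smul_eq_mul]
            exact mul_le_mul_of_nonneg_left hσε hw'0
          have hRb : (1 - lam) * R ≤ lam * ε := by
            have h1 : (1 - lam) * R ≤ (1 - lam) * (w' * ε) :=
              mul_le_mul_of_nonneg_left hre h1lam.le
            have h2 : (1 - lam) * (w' * ε) = lam * ε := by
              rw [← mul_assoc, hmulw]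
            linarith only [h1, h2]
          -- auxiliary rpow identities
          have hQdef : A * t ^ (-β - 1) = (A * t ^ (-β)) * (1 / t) := by
            rw [show (-β - 1 : ℝ) = -β + (-1) by ring, Real.rpow_add ht0, Real.rpow_neg_one]
            ring
          have hlamε : lam * ε = A * t ^ (-β - 1) := by
            rw [hlamdef, hεdef, hQdef]
            ring
          -- third term
          have hnz : ‖w' • (f - σ)‖ ≤ 4 * lam := by
            rw [norm_smul, Real.norm_eq_abs, abs_of_nonneg hw'0]
            calc w' * ‖f - σ‖ ≤ w' * 2 := mul_le_mul_of_nonneg_left hfs2 hw'0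
              _ ≤ 4 * lam := by
                  rw [hw', div_mul_eq_mul_div, div_le_iff₀ h1lam]
                  nlinarith only [hlam0, hlamhalf]
          have hnzq : ‖w' • (f - σ)‖ ^ q ≤ (4 * lam) ^ q :=
            Real.rpow_le_rpow (norm_nonneg _) hnz hq0.le
          have hEq : E ^ (1 - q) ≤ (A * t ^ (-β)) ^ (1 - q) :=
            Real.rpow_le_rpow_of_nonpos hP0 hcase.le (by linarith only [hq1])
          have hthird : T ≤ A * t ^ (-β - 1) := by
            have h1 : T ≤ 2 * γ * (4 * lam) ^ q * (A * t ^ (-β)) ^ (1 - q) := by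
              rw [hT']
              apply mul_le_mul (mul_le_mul_of_nonneg_left hnzq (by positivity)) hEq
                (Real.rpow_nonneg hE0.le _)
              positivity
            have h2 : 2 * γ * (4 * lam) ^ q * (A * t ^ (-β)) ^ (1 - q)
                = (2 * γ * 16 ^ q * A ^ (1 - q)) * (t ^ (-(q:ℝ)) * t ^ ((-β) * (1 - q))) := by
              have e : 4 * lam = 16 / t := by rw [hlamdef]; ring
              rw [e, Real.div_rpow (by norm_num) ht0.le,
                Real.mul_rpow hA0.le (Real.rpow_nonneg ht0.le _),
                ← Real.rpow_mul ht0.le]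
              rw [Real.rpow_neg ht0.le q]
              ring
            have h3 : t ^ (-(q:ℝ)) * t ^ ((-β) * (1 - q)) = t ^ (-β - 1) := by
              rw [← Real.rpow_add ht0]
              congr 1
              rw [hβ]
              field_simp
              ring
            have h4 : 2 * γ * 16 ^ q * A ^ (1 - q) ≤ A := by
              have h5 : A ^ q * A ^ (1 - q) = A := by
                rw [← Real.rpow_add hA0]; norm_num
              have h6 : (2 * 16 ^ q * γ) * A ^ (1 - q) ≤ A ^ q * A ^ (1 - q) :=
                mul_le_mul_of_nonneg_right hAq (Real.rpow_nonneg hA0.le _)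
              rw [h5] at h6
              calc 2 * γ * 16 ^ q * A ^ (1 - q) = (2 * 16 ^ q * γ) * A ^ (1 - q) := by ring
                _ ≤ A := h6
            calc T ≤ 2 * γ * (4 * lam) ^ q * (A * t ^ (-β)) ^ (1 - q) := h1
              _ = (2 * γ * 16 ^ q * A ^ (1 - q)) * (t ^ (-(q:ℝ)) * t ^ ((-β) * (1 - q))) := h2
              _ = (2 * γ * 16 ^ q * A ^ (1 - q)) * t ^ (-β - 1) := by rw [h3]
              _ ≤ A * t ^ (-β - 1) :=
                  mul_le_mul_of_nonneg_right h4 (Real.rpow_nonneg ht0.le _)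
          have hTb : (1 - lam) * T ≤ A * t ^ (-β - 1) := by
            have h1 : (1 - lam) * T ≤ 1 * T :=
              mul_le_mul_of_nonneg_right (by linarith only [hlam0]) hT0
            linarith only [h1, hthird]
          -- first term
          have hfirst : (1 - lam) * E ≤ A * t ^ (-β) - 2 * (A * t ^ (-β - 1)) := by
            have e1 : E ≤ A * ((t - 1) ^ (-β)) := by
              have e0 : ((m:ℝ) + 1) = t - 1 := by rw [ht]; ring
              rw [← e0]
              exact hEb
            have e2 : (t - 1) ^ (-β) ≤ t ^ (-β) * (1 + 2 / t) := helperA_aux ht2 hβ0 hβ1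
            have e3 : E ≤ A * t ^ (-β) * (1 + 2 / t) := by
              calc E ≤ A * ((t - 1) ^ (-β)) := e1
                _ ≤ A * (t ^ (-β) * (1 + 2 / t)) := mul_le_mul_of_nonneg_left e2 hA0.le
                _ = A * t ^ (-β) * (1 + 2 / t) := by ring
            have e4 : (1 - lam) * E ≤ (1 - lam) * (A * t ^ (-β) * (1 + 2 / t)) :=
              mul_le_mul_of_nonneg_left e3 h1lam.le
            have e5 : (1 - lam) * (A * t ^ (-β) * (1 + 2 / t))
                ≤ A * t ^ (-β) - 2 * ((A * t ^ (-β)) * (1 / t)) := by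
              rw [hlamdef]
              have expand : (1 - 4 / t) * (A * t ^ (-β) * (1 + 2 / t))
                  = (A * t ^ (-β)) * (1 - 2 * (1 / t) - 8 * (1 / t) ^ 2) := by
                field_simp
                ring
              rw [expand]
              nlinarith only [mul_nonneg hP0.le (sq_nonneg (1 / t))]
            rw [hQdef]
            linarith only [e4, e5]
          -- assembly
          rw [hnorm_eq]
          calc (1 - lam) * ‖(f - p) + w' • (f - σ)‖
              ≤ (1 - lam) * (E + R + T) := mul_le_mul_of_nonneg_left hsb h1lam.le
            _ = (1 - lam) * E + (1 - lam) * R + (1 - lam) * T := by ring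
            _ ≤ (A * t ^ (-β) - 2 * (A * t ^ (-β - 1))) + A * t ^ (-β - 1)
                + A * t ^ (-β - 1) := by linarith only [hfirst, hRb, hlamε, hTb]
            _ = A * t ^ (-β) := by ring

  obtain ⟨s, c, hcard, _, hEb⟩ := key v
  refine ⟨s, c, g, hcard, fun i _ => hgD i, ?_⟩
  have hexp : (1/q - 1 : ℝ) = -β := by rw [hβ]; ring
  rw [hexp]
  exact hEb
end

section
/- Let 2 ≤ p < ∞. The modulus of smoothness of L_p(Ω, μ) satisfies η(L_p, w) ≤ (p − 1) w² / 2 for all w > 0; and for 1 ≤ p ≤ 2 it satisfies η(L_p, w) ≤ w^p / p. -/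
open Real Set


lemma aux_psi_nonneg {s : ℝ} (hs : 1 ≤ s) {t : ℝ} (ht0 : 0 ≤ t) (ht1 : t ≤ 1) :
    (1 - s * t) * (1 + t) ^ s ≤ (1 + s * t) * (1 - t) ^ s := by
  set h : ℝ → ℝ := fun u => (1 + s * u) * (1 - u) ^ s - (1 - s * u) * (1 + u) ^ s with hh
  have hd : ∀ x : ℝ, HasDerivAt h
      (s * (1 - x) ^ s + (1 + s * x) * (s * (1 - x) ^ (s - 1) * (-1))
        - ((-s) * (1 + x) ^ s + (1 - s * x) * (s * (1 + x) ^ (s - 1) * 1))) x := by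
    intro x
    have h1 : HasDerivAt (fun u : ℝ => (1 - u) ^ s) (s * (1 - x) ^ (s - 1) * (-1)) x := by
      have := ((hasDerivAt_id x).const_sub 1).rpow_const (p := s) (Or.inr hs)
      simpa [mul_comm, mul_assoc, mul_left_comm] using this
    have h2 : HasDerivAt (fun u : ℝ => (1 + u) ^ s) (s * (1 + x) ^ (s - 1) * 1) x := by
      have := ((hasDerivAt_id x).const_add 1).rpow_const (p := s) (Or.inr hs)
      simpa [mul_comm, mul_assoc, mul_left_comm] using this
    have h3 : HasDerivAt (fun u : ℝ => 1 + s * u) s x := by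
      simpa using ((hasDerivAt_id x).const_mul s).const_add 1
    have h4 : HasDerivAt (fun u : ℝ => 1 - s * u) (-s) x := by
      simpa using ((hasDerivAt_id x).const_mul s).const_sub 1
    exact (h3.mul h1).sub (h4.mul h2)
  have hcont : Continuous h := by
    have c1 : Continuous fun u : ℝ => (1 - u) ^ s :=
      (continuous_const.sub continuous_id).rpow_const (fun x => Or.inr (by linarith))
    have c2 : Continuous fun u : ℝ => (1 + u) ^ s :=
      (continuous_const.add continuous_id).rpow_const (fun x => Or.inr (by linarith))
    exact ((continuous_const.add (continuous_const.mul continuous_id)).mul c1).sub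
      ((continuous_const.sub (continuous_const.mul continuous_id)).mul c2)
  have hmono : MonotoneOn h (Icc (0:ℝ) 1) := by
    apply monotoneOn_of_deriv_nonneg (convex_Icc 0 1) hcont.continuousOn
    · intro x _
      exact (hd x).differentiableAt.differentiableWithinAt
    · intro x hx
      rw [interior_Icc] at hx
      obtain ⟨hx0, hx1⟩ := hx
      have h1x : (0:ℝ) < 1 - x := by linarith
      have e1 : (1 - x) ^ s = (1 - x) ^ (s - 1) * (1 - x) := by
        nth_rewrite 1 [show s = s - 1 + 1 by ring]
        rw [Real.rpow_add_one (ne_of_gt h1x)]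
      have e2 : (1 + x) ^ s = (1 + x) ^ (s - 1) * (1 + x) := by
        nth_rewrite 1 [show s = s - 1 + 1 by ring]
        rw [Real.rpow_add_one (by positivity)]
      have hAB : (1 - x) ^ (s - 1) ≤ (1 + x) ^ (s - 1) :=
        Real.rpow_le_rpow (by linarith) (by linarith) (by linarith)
      have hE : deriv h x
          = s * x * (1 + s) * ((1 + x) ^ (s - 1) - (1 - x) ^ (s - 1)) := by
        rw [(hd x).deriv, e1, e2]; ring
      rw [hE]
      have hs0 : (0:ℝ) ≤ s := by linarith
      exact mul_nonneg (by positivity) (sub_nonneg.mpr hAB)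
  have h0 : h 0 = 0 := by simp [hh]
  have := hmono (left_mem_Icc.mpr zero_le_one) ⟨ht0, ht1⟩ ht0
  rw [h0] at this
  have h2 : 0 ≤ (1 + s * t) * (1 - t) ^ s - (1 - s * t) * (1 + t) ^ s := this
  linarith

lemma aux_scalar_bcl {p : ℝ} (hp : 2 ≤ p) {t : ℝ} (ht0 : 0 ≤ t) (ht1 : t ≤ 1) :
    (1 + t) ^ p + (1 - t) ^ p ≤ 2 * (1 + (p - 1) * t ^ 2) ^ (p / 2) := by
  have hp0 : (0:ℝ) < p := by linarith
  have hs : (1:ℝ) ≤ p - 1 := by linarith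
  set L : ℝ → ℝ := fun u =>
    Real.log ((1 + u) ^ p + (1 - u) ^ p) - p / 2 * Real.log (1 + (p - 1) * u ^ 2) with hL
  have hNpos : ∀ u : ℝ, 0 ≤ u → u ≤ 1 → 0 < (1 + u) ^ p + (1 - u) ^ p := by
    intro u hu0 hu1
    have : (0:ℝ) < (1 + u) ^ p := Real.rpow_pos_of_pos (by linarith) p
    have h2 : (0:ℝ) ≤ (1 - u) ^ p := Real.rpow_nonneg (by linarith) p
    linarith
  have hMpos : ∀ u : ℝ, 0 ≤ u → 0 < 1 + (p - 1) * u ^ 2 := by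
    intro u hu0
    nlinarith [sq_nonneg u]
  have cN : Continuous fun u : ℝ => (1 + u) ^ p + (1 - u) ^ p :=
    ((continuous_const.add continuous_id).rpow_const (fun x => Or.inr hp0.le)).add
      ((continuous_const.sub continuous_id).rpow_const (fun x => Or.inr hp0.le))
  have cM : Continuous fun u : ℝ => 1 + (p - 1) * u ^ 2 := by continuity
  have hderivN : ∀ x : ℝ, HasDerivAt (fun u : ℝ => (1 + u) ^ p + (1 - u) ^ p)
      (p * (1 + x) ^ (p - 1) * 1 + p * (1 - x) ^ (p - 1) * (-1)) x := by
    intro x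
    have h1 : HasDerivAt (fun u : ℝ => (1 + u) ^ p) (p * (1 + x) ^ (p - 1) * 1) x := by
      have := ((hasDerivAt_id x).const_add 1).rpow_const (p := p) (Or.inr (by linarith))
      simpa [mul_comm, mul_assoc, mul_left_comm] using this
    have h2 : HasDerivAt (fun u : ℝ => (1 - u) ^ p) (p * (1 - x) ^ (p - 1) * (-1)) x := by
      have := ((hasDerivAt_id x).const_sub 1).rpow_const (p := p) (Or.inr (by linarith))
      simpa [mul_comm, mul_assoc, mul_left_comm] using this
    exact h1.add h2
  have hderivM : ∀ x : ℝ, HasDerivAt (fun u : ℝ => 1 + (p - 1) * u ^ 2)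
      ((p - 1) * (2 * x)) x := by
    intro x
    have : HasDerivAt (fun u : ℝ => u ^ 2) (2 * x) x := by
      simpa using hasDerivAt_pow 2 x
    simpa using (this.const_mul (p - 1)).const_add 1
  have hderivL : ∀ x ∈ Set.Ioo (0:ℝ) 1, HasDerivAt L
      ((p * (1 + x) ^ (p - 1) * 1 + p * (1 - x) ^ (p - 1) * (-1)) /
          ((1 + x) ^ p + (1 - x) ^ p)
        - p / 2 * ((p - 1) * (2 * x) / (1 + (p - 1) * x ^ 2))) x := by
    intro x hx
    have hN := (hderivN x).log (ne_of_gt (hNpos x hx.1.le hx.2.le))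
    have hM := (hderivM x).log (ne_of_gt (hMpos x hx.1.le))
    exact hN.sub (hM.const_mul (p / 2))
  have hanti : AntitoneOn L (Set.Icc (0:ℝ) 1) := by
    apply antitoneOn_of_deriv_nonpos (convex_Icc 0 1)
    · apply ContinuousOn.sub
      · apply ContinuousOn.log cN.continuousOn
        intro x hx
        exact ne_of_gt (hNpos x hx.1 hx.2)
      · apply ContinuousOn.mul continuousOn_const
        apply ContinuousOn.log cM.continuousOn
        intro x hx
        exact ne_of_gt (hMpos x hx.1)
    · intro x hx
      rw [interior_Icc] at hx
      exact (hderivL x hx).differentiableAt.differentiableWithinAt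
    · intro x hx
      rw [interior_Icc] at hx
      obtain ⟨hx0, hx1⟩ := hx
      rw [(hderivL x ⟨hx0, hx1⟩).deriv]
      set N := (1 + x) ^ p + (1 - x) ^ p with hN
      set M := 1 + (p - 1) * x ^ 2 with hM
      have hNp := hNpos x hx0.le hx1.le
      have hMp := hMpos x hx0.le
      rw [sub_nonpos]
      have e1 : (1 + x) ^ p = (1 + x) ^ (p - 1) * (1 + x) := by
        nth_rewrite 1 [show p = p - 1 + 1 by ring]
        rw [Real.rpow_add_one (by positivity)]
      have e2 : (1 - x) ^ p = (1 - x) ^ (p - 1) * (1 - x) := by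
        nth_rewrite 1 [show p = p - 1 + 1 by ring]
        rw [Real.rpow_add_one (ne_of_gt (by linarith : (0:ℝ) < 1 - x))]
      have key := aux_psi_nonneg hs (le_of_lt hx0) (le_of_lt hx1)
      have hkey' : 0 ≤ p * ((1 + (p - 1) * x) * (1 - x) ^ (p - 1)
          - (1 - (p - 1) * x) * (1 + x) ^ (p - 1)) :=
        mul_nonneg hp0.le (sub_nonneg.mpr key)
      have cross : (p * (1 + x) ^ (p - 1) * 1 + p * (1 - x) ^ (p - 1) * (-1)) * M
          ≤ (p / 2 * ((p - 1) * (2 * x))) * N := by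
        rw [hN, hM, e1, e2]
        nlinarith [hkey']
      rw [show p / 2 * ((p - 1) * (2 * x) / M) = (p / 2 * ((p - 1) * (2 * x))) / M by ring]
      exact (div_le_div_iff₀ hNp hMp).mpr cross
  have hLt : L t ≤ L 0 := hanti (left_mem_Icc.mpr zero_le_one) ⟨ht0, ht1⟩ ht0
  have hA : 0 < (1 + t) ^ p + (1 - t) ^ p := hNpos t ht0 ht1
  have hMt : 0 < 1 + (p - 1) * t ^ 2 := hMpos t ht0
  have hB : 0 < 2 * (1 + (p - 1) * t ^ 2) ^ (p / 2) := by positivity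
  have hlog : Real.log ((1 + t) ^ p + (1 - t) ^ p)
      ≤ Real.log (2 * (1 + (p - 1) * t ^ 2) ^ (p / 2)) := by
    rw [Real.log_mul two_ne_zero (by positivity), Real.log_rpow hMt]
    simp only [hL] at hLt
    norm_num [Real.one_rpow, Real.log_one] at hLt
    linarith
  calc (1 + t) ^ p + (1 - t) ^ p = Real.exp (Real.log ((1 + t) ^ p + (1 - t) ^ p)) :=
        (Real.exp_log hA).symm
    _ ≤ Real.exp (Real.log (2 * (1 + (p - 1) * t ^ 2) ^ (p / 2))) :=
        Real.exp_le_exp.mpr hlog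
    _ = 2 * (1 + (p - 1) * t ^ 2) ^ (p / 2) := Real.exp_log hB

lemma aux_mean2 {z₁ z₂ r : ℝ} (h₁ : 0 ≤ z₁) (h₂ : 0 ≤ z₂) (hr : 1 ≤ r) :
    ((z₁ + z₂) / 2) ^ r ≤ (z₁ ^ r + z₂ ^ r) / 2 := by
  have h := NNReal.rpow_arith_mean_le_arith_mean2_rpow (1/2) (1/2)
    z₁.toNNReal z₂.toNNReal (by rw [← NNReal.coe_inj]; push_cast; norm_num) hr
  have h2 := NNReal.coe_le_coe.mpr h
  push_cast [NNReal.coe_rpow, Real.coe_toNNReal _ h₁, Real.coe_toNNReal _ h₂] at h2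
  rw [show (z₁ + z₂) / 2 = 1/2 * z₁ + 1/2 * z₂ by ring]
  linarith

lemma aux_rpow_subadd {x y r : ℝ} (hx : 0 ≤ x) (hy : 0 ≤ y) (hr0 : 0 ≤ r) (hr1 : r ≤ 1) :
    (x + y) ^ r ≤ x ^ r + y ^ r := by
  have h := NNReal.rpow_add_le_add_rpow x.toNNReal y.toNNReal hr0 hr1
  have h2 := NNReal.coe_le_coe.mpr h
  push_cast [NNReal.coe_rpow, Real.coe_toNNReal _ hx, Real.coe_toNNReal _ hy] at h2
  exact h2

lemma aux_bcl_nonneg {p : ℝ} (hp : 2 ≤ p) {a b : ℝ} (ha : 0 ≤ a) (hb : 0 ≤ b) (hba : b ≤ a) :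
    (a + b) ^ p + |a - b| ^ p ≤ 2 * (a ^ 2 + (p - 1) * b ^ 2) ^ (p / 2) := by
  have hp0 : (0:ℝ) < p := by linarith
  rcases eq_or_lt_of_le ha with rfl | ha0
  · have hb0 : b = 0 := le_antisymm hba hb
    subst hb0
    norm_num [Real.zero_rpow (ne_of_gt hp0),
      Real.zero_rpow (ne_of_gt (by linarith : (0:ℝ) < p/2))]
  · set t := b / a with htdef
    have ht0 : 0 ≤ t := div_nonneg hb ha0.le
    have ht1 : t ≤ 1 := (div_le_one ha0).mpr hba
    have hane : a ≠ 0 := ne_of_gt ha0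
    have hab : a + b = a * (1 + t) := by rw [htdef]; field_simp
    have hab' : a - b = a * (1 - t) := by rw [htdef]; field_simp
    have habs : |a - b| = a - b := abs_of_nonneg (by linarith)
    have key := aux_scalar_bcl hp ht0 ht1
    have e1 : (a + b) ^ p = a ^ p * (1 + t) ^ p := by
      rw [hab, Real.mul_rpow ha0.le (by linarith)]
    have e2 : |a - b| ^ p = a ^ p * (1 - t) ^ p := by
      rw [habs, hab', Real.mul_rpow ha0.le (by linarith)]
    have hap : (0:ℝ) ≤ a ^ p := Real.rpow_nonneg ha0.le p
    have step : (a + b) ^ p + |a - b| ^ p ≤ a ^ p * (2 * (1 + (p-1) * t ^ 2) ^ (p/2)) := by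
      rw [e1, e2, ← mul_add]
      exact mul_le_mul_of_nonneg_left key hap
    have hfinal : a ^ p * (1 + (p-1) * t ^ 2) ^ (p/2) = (a ^ 2 + (p-1) * b ^ 2) ^ (p/2) := by
      have ha2 : a ^ p = (a ^ 2 : ℝ) ^ (p / 2) := by
        rw [← Real.rpow_natCast a 2, ← Real.rpow_mul ha0.le]
        congr 1
        push_cast
        ring
      rw [ha2, ← Real.mul_rpow (by positivity)
        (by nlinarith [sq_nonneg t] : (0:ℝ) ≤ 1 + (p-1) * t ^ 2)]
      congr 1
      rw [htdef]
      field_simp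
    calc (a + b) ^ p + |a - b| ^ p ≤ a ^ p * (2 * (1 + (p-1) * t ^ 2) ^ (p/2)) := step
      _ = 2 * (a ^ p * (1 + (p-1) * t ^ 2) ^ (p/2)) := by ring
      _ = 2 * (a ^ 2 + (p-1) * b ^ 2) ^ (p/2) := by rw [hfinal]

lemma aux_bcl_nn {p : ℝ} (hp : 2 ≤ p) {a b : ℝ} (ha : 0 ≤ a) (hb : 0 ≤ b) :
    (a + b) ^ p + |a - b| ^ p ≤ 2 * (a ^ 2 + (p - 1) * b ^ 2) ^ (p / 2) := by
  rcases le_total b a with hba | hab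
  · exact aux_bcl_nonneg hp ha hb hba
  · have h := aux_bcl_nonneg hp hb ha hab
    rw [add_comm b a, abs_sub_comm b a] at h
    refine h.trans ?_
    have hsq : a ^ 2 ≤ b ^ 2 := pow_le_pow_left₀ ha hab 2
    have hmono : (b ^ 2 + (p - 1) * a ^ 2) ≤ (a ^ 2 + (p - 1) * b ^ 2) := by nlinarith
    have := Real.rpow_le_rpow (by nlinarith) hmono (by positivity : (0:ℝ) ≤ p / 2)
    linarith

lemma aux_bcl {p : ℝ} (hp : 2 ≤ p) (a b : ℝ) :
    |a + b| ^ p + |a - b| ^ p ≤ 2 * (a ^ 2 + (p - 1) * b ^ 2) ^ (p / 2) := by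
  rcases le_total 0 a with ha | ha <;> rcases le_total 0 b with hb | hb
  · have h := aux_bcl_nn hp ha hb
    rwa [abs_of_nonneg (by linarith)]
  · have h := aux_bcl_nn hp ha (neg_nonneg.mpr hb)
    rw [show a + -b = a - b by ring, show a - -b = a + b by ring, neg_sq] at h
    rw [abs_of_nonneg (by linarith : (0:ℝ) ≤ a - b)]
    linarith
  · have h := aux_bcl_nn hp (neg_nonneg.mpr ha) hb
    rw [show -a + b = |a - b| from by rw [abs_of_nonpos (by linarith : a - b ≤ 0)]; ring,
      show -a - b = -(a + b) by ring, abs_neg, neg_sq] at h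
    linarith
  · have h := aux_bcl_nn hp (neg_nonneg.mpr ha) (neg_nonneg.mpr hb)
    rw [show -a + -b = |a + b| from by rw [abs_of_nonpos (by linarith : a + b ≤ 0)]; ring,
      show -a - -b = b - a by ring, ← abs_sub_comm a b, neg_sq, neg_sq] at h
    linarith

lemma aux_clarkson {p : ℝ} (hp1 : 1 ≤ p) (hp2 : p ≤ 2) (a b : ℝ) :
    |a + b| ^ p + |a - b| ^ p ≤ 2 * (|a| ^ p + |b| ^ p) := by
  have hp0 : (0:ℝ) < p := by linarith
  set u := |a + b| with hu
  set v := |a - b| with hv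
  have hu0 : 0 ≤ u := abs_nonneg _
  have hv0 : 0 ≤ v := abs_nonneg _
  have h2p : 1 ≤ 2 / p := by rw [le_div_iff₀ hp0]; linarith
  have step1 : ((u ^ p + v ^ p) / 2) ^ (2/p) ≤ (u ^ (2:ℝ) + v ^ (2:ℝ)) / 2 := by
    have := aux_mean2 (Real.rpow_nonneg hu0 p) (Real.rpow_nonneg hv0 p) h2p
    calc ((u ^ p + v ^ p) / 2) ^ (2/p) ≤ ((u ^ p) ^ (2/p) + (v ^ p) ^ (2/p)) / 2 := this
      _ = (u ^ (2:ℝ) + v ^ (2:ℝ)) / 2 := by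
          rw [← Real.rpow_mul hu0, ← Real.rpow_mul hv0]
          congr 2 <;> field_simp
  have rp2 : ∀ c : ℝ, |c| ^ (2:ℝ) = c ^ 2 := fun c => by
    rw [show (2:ℝ) = ((2:ℕ):ℝ) by norm_num, Real.rpow_natCast, sq_abs]
  have step2 : (u ^ (2:ℝ) + v ^ (2:ℝ)) / 2 = a ^ 2 + b ^ 2 := by
    rw [hu, hv, rp2, rp2]; ring
  have hpne : p ≠ 0 := ne_of_gt hp0
  have ea : ∀ c : ℝ, ((c ^ 2 : ℝ)) ^ (p/2) = |c| ^ p := fun c => by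
    rw [← sq_abs, ← Real.rpow_natCast |c| 2, ← Real.rpow_mul (abs_nonneg c)]
    congr 1
    push_cast
    ring
  have step3 : (a ^ 2 + b ^ 2) ^ (p/2) ≤ |a| ^ p + |b| ^ p := by
    have h := aux_rpow_subadd (r := p/2) (sq_nonneg a) (sq_nonneg b) (by positivity)
      (by linarith)
    rwa [ea, ea] at h
  calc u ^ p + v ^ p = 2 * (((u ^ p + v ^ p) / 2) ^ (2/p)) ^ (p/2) := by
        rw [← Real.rpow_mul (by positivity), show 2/p*(p/2) = 1 by field_simp, Real.rpow_one]
        ring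
    _ ≤ 2 * (a ^ 2 + b ^ 2) ^ (p/2) := by
        have := Real.rpow_le_rpow (Real.rpow_nonneg (by positivity) _)
          (step1.trans_eq step2) (by positivity : (0:ℝ) ≤ p/2)
        linarith
    _ ≤ 2 * (|a| ^ p + |b| ^ p) := by linarith

open MeasureTheory
open scoped ENNReal NNReal

lemma aux_enn_pow {r p : ℝ} (hp0 : 0 ≤ p) :
    (‖r‖₊ : ℝ≥0∞) ^ p = ENNReal.ofReal (|r| ^ p) := by
  rw [← enorm_eq_nnnorm, ← ofReal_norm, ENNReal.ofReal_rpow_of_nonneg (norm_nonneg r) hp0,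
    Real.norm_eq_abs]

lemma aux_norm_rpow {Ω : Type*} [MeasurableSpace Ω] {μ : Measure Ω} {p : ℝ} (hp : 1 ≤ p)
    (f : Lp ℝ (ENNReal.ofReal p) μ) :
    ‖f‖ ^ p = (∫⁻ a, (‖f a‖₊ : ℝ≥0∞) ^ p ∂μ).toReal ∧
      (∫⁻ a, (‖f a‖₊ : ℝ≥0∞) ^ p ∂μ) ≠ ⊤ := by
  have hp0 : (0:ℝ) < p := by linarith
  have hP0 : ENNReal.ofReal p ≠ 0 := by
    simp only [ne_eq, ENNReal.ofReal_eq_zero, not_le]; linarith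
  have hPt : ENNReal.ofReal p ≠ ⊤ := ENNReal.ofReal_ne_top
  have htr : (ENNReal.ofReal p).toReal = p := ENNReal.toReal_ofReal hp0.le
  have hlt : eLpNorm f (ENNReal.ofReal p) μ < ⊤ := Lp.eLpNorm_lt_top f
  rw [eLpNorm_eq_lintegral_rpow_enorm_toReal hP0 hPt, htr] at hlt
  simp only [enorm_eq_nnnorm] at hlt
  have hfin : (∫⁻ a, (‖f a‖₊ : ℝ≥0∞) ^ p ∂μ) ≠ ⊤ := by
    intro htop
    rw [htop, ENNReal.top_rpow_of_pos (by positivity)] at hlt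
    exact (lt_irrefl _ hlt).elim
  refine ⟨?_, hfin⟩
  simp only [← enorm_eq_nnnorm]
  rw [Lp.norm_def, eLpNorm_eq_lintegral_rpow_enorm_toReal hP0 hPt, htr, ENNReal.toReal_rpow,
    ← ENNReal.rpow_mul, one_div_mul_cancel (ne_of_gt hp0), ENNReal.rpow_one]

lemma aux_meas {Ω : Type*} [MeasurableSpace Ω] {μ : Measure Ω} {P : ℝ≥0∞} (p : ℝ)
    (f : Lp ℝ P μ) : AEMeasurable (fun a => (‖f a‖₊ : ℝ≥0∞) ^ p) μ :=
  (Lp.aestronglyMeasurable f).enorm.pow_const p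

-- Integrated Clarkson for 1 ≤ p ≤ 2
lemma aux_int_clarkson {Ω : Type*} [MeasurableSpace Ω] {μ : Measure Ω} {p : ℝ}
    (hp1 : 1 ≤ p) (hp2 : p ≤ 2) (x z : Lp ℝ (ENNReal.ofReal p) μ) :
    ‖x + z‖ ^ p + ‖x - z‖ ^ p ≤ 2 * (‖x‖ ^ p + ‖z‖ ^ p) := by
  have hp0 : (0:ℝ) < p := by linarith
  obtain ⟨ef, hf⟩ := aux_norm_rpow hp1 (x + z)
  obtain ⟨eg, hg⟩ := aux_norm_rpow hp1 (x - z)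
  obtain ⟨ex, hxf⟩ := aux_norm_rpow hp1 x
  obtain ⟨ez, hzf⟩ := aux_norm_rpow hp1 z
  have hptwise : ∀ᵐ a ∂μ, (‖(x + z : Lp ℝ (ENNReal.ofReal p) μ) a‖₊ : ℝ≥0∞) ^ p
      + (‖(x - z : Lp ℝ (ENNReal.ofReal p) μ) a‖₊ : ℝ≥0∞) ^ p
      ≤ 2 * ((‖x a‖₊ : ℝ≥0∞) ^ p + (‖z a‖₊ : ℝ≥0∞) ^ p) := by
    filter_upwards [Lp.coeFn_add x z, Lp.coeFn_sub x z] with a ha hs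
    rw [ha, hs]
    simp only [Pi.add_apply, Pi.sub_apply]
    rw [aux_enn_pow hp0.le, aux_enn_pow hp0.le, aux_enn_pow hp0.le, aux_enn_pow hp0.le,
      ← ENNReal.ofReal_add (by positivity) (by positivity)]
    calc ENNReal.ofReal (|x a + z a| ^ p + |x a - z a| ^ p)
        ≤ ENNReal.ofReal (2 * (|x a| ^ p + |z a| ^ p)) :=
          ENNReal.ofReal_le_ofReal (aux_clarkson hp1 hp2 (x a) (z a))
      _ = 2 * (ENNReal.ofReal (|x a| ^ p) + ENNReal.ofReal (|z a| ^ p)) := by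
          rw [ENNReal.ofReal_mul (by norm_num), ENNReal.ofReal_add (by positivity) (by positivity)]
          norm_num
  have hint : (∫⁻ a, (‖(x + z : Lp ℝ (ENNReal.ofReal p) μ) a‖₊ : ℝ≥0∞) ^ p ∂μ)
      + (∫⁻ a, (‖(x - z : Lp ℝ (ENNReal.ofReal p) μ) a‖₊ : ℝ≥0∞) ^ p ∂μ)
      ≤ 2 * ((∫⁻ a, (‖x a‖₊ : ℝ≥0∞) ^ p ∂μ) + (∫⁻ a, (‖z a‖₊ : ℝ≥0∞) ^ p ∂μ)) := by
    rw [← lintegral_add_left' (aux_meas p (x + z)) _, ← lintegral_add_left' (aux_meas p x) _,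
      ← lintegral_const_mul' _ _ ENNReal.ofNat_ne_top]
    exact lintegral_mono_ae hptwise
  have hRfin : 2 * ((∫⁻ a, (‖x a‖₊ : ℝ≥0∞) ^ p ∂μ) + (∫⁻ a, (‖z a‖₊ : ℝ≥0∞) ^ p ∂μ)) ≠ ⊤ :=
    ENNReal.mul_ne_top ENNReal.ofNat_ne_top (by rw [ne_eq, ENNReal.add_eq_top]; tauto)
  have := ENNReal.toReal_mono hRfin hint
  rw [ENNReal.toReal_add hf hg, ENNReal.toReal_mul, ENNReal.toReal_add hxf hzf,
    ENNReal.toReal_ofNat] at this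
  rw [ef, eg, ex, ez]
  exact this

lemma aux_enn_sq (r : ℝ) : (‖r‖₊ : ℝ≥0∞) ^ (2:ℝ) = ENNReal.ofReal (r ^ 2) := by
  rw [aux_enn_pow (by norm_num : (0:ℝ) ≤ 2)]
  congr 1
  rw [show (2:ℝ) = ((2:ℕ):ℝ) by norm_num, Real.rpow_natCast, sq_abs]

lemma aux_int_bcl {Ω : Type*} [MeasurableSpace Ω] {μ : Measure Ω} {p : ℝ} (hp : 2 ≤ p)
    (x z : Lp ℝ (ENNReal.ofReal p) μ) :
    ((‖x + z‖ ^ p + ‖x - z‖ ^ p) / 2) ^ (2/p) ≤ ‖x‖ ^ 2 + (p - 1) * ‖z‖ ^ 2 := by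
  have hp1 : (1:ℝ) ≤ p := by linarith
  have hp0 : (0:ℝ) < p := by linarith
  haveI : Fact (1 ≤ ENNReal.ofReal p) := ⟨by simpa using ENNReal.ofReal_le_ofReal hp1⟩
  obtain ⟨ef, hf⟩ := aux_norm_rpow hp1 (x + z)
  obtain ⟨eg, hg⟩ := aux_norm_rpow hp1 (x - z)
  obtain ⟨ex, hxf⟩ := aux_norm_rpow hp1 x
  obtain ⟨ez, hzf⟩ := aux_norm_rpow hp1 z
  set c : ℝ≥0∞ := ENNReal.ofReal (p - 1) with hc
  set A : Ω → ℝ≥0∞ := fun a => (‖x a‖₊ : ℝ≥0∞) ^ (2:ℝ) with hA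
  set B : Ω → ℝ≥0∞ := fun a => c * (‖z a‖₊ : ℝ≥0∞) ^ (2:ℝ) with hB
  have hAmeas : AEMeasurable A μ := (Lp.aestronglyMeasurable x).enorm.pow_const _
  have hBmeas : AEMeasurable B μ :=
    ((Lp.aestronglyMeasurable z).enorm.pow_const _).const_mul c
  -- pointwise BCL
  have hptwise : ∀ᵐ a ∂μ, (‖(x + z : Lp ℝ (ENNReal.ofReal p) μ) a‖₊ : ℝ≥0∞) ^ p
      + (‖(x - z : Lp ℝ (ENNReal.ofReal p) μ) a‖₊ : ℝ≥0∞) ^ p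
      ≤ 2 * (A a + B a) ^ (p/2) := by
    filter_upwards [Lp.coeFn_add x z, Lp.coeFn_sub x z] with a ha hs
    rw [ha, hs]
    simp only [Pi.add_apply, Pi.sub_apply, hA, hB]
    rw [aux_enn_pow hp0.le, aux_enn_pow hp0.le, aux_enn_sq, aux_enn_sq,
      ← ENNReal.ofReal_add (by positivity) (by positivity)]
    have key := aux_bcl hp (x a) (z a)
    have hnn : (0:ℝ) ≤ (x a) ^ 2 + (p - 1) * (z a) ^ 2 := by nlinarith [sq_nonneg (x a), sq_nonneg (z a)]
    calc ENNReal.ofReal (|x a + z a| ^ p + |x a - z a| ^ p)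
        ≤ ENNReal.ofReal (2 * ((x a) ^ 2 + (p - 1) * (z a) ^ 2) ^ (p/2)) :=
          ENNReal.ofReal_le_ofReal key
      _ = 2 * (ENNReal.ofReal ((x a) ^ 2) + c * ENNReal.ofReal ((z a) ^ 2)) ^ (p/2) := by
          rw [ENNReal.ofReal_mul (by norm_num), ← ENNReal.ofReal_rpow_of_nonneg hnn (by positivity),
            ENNReal.ofReal_add (sq_nonneg _) (by nlinarith [sq_nonneg (z a)]),
            ENNReal.ofReal_mul (by linarith)]
          norm_num
          rfl
  set Jf := ∫⁻ a, (‖(x + z : Lp ℝ (ENNReal.ofReal p) μ) a‖₊ : ℝ≥0∞) ^ p ∂μ with hJf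
  set Jg := ∫⁻ a, (‖(x - z : Lp ℝ (ENNReal.ofReal p) μ) a‖₊ : ℝ≥0∞) ^ p ∂μ with hJg
  set Jx := ∫⁻ a, (‖x a‖₊ : ℝ≥0∞) ^ p ∂μ with hJx
  set Jz := ∫⁻ a, (‖z a‖₊ : ℝ≥0∞) ^ p ∂μ with hJz
  set S := ∫⁻ a, (A a + B a) ^ (p/2) ∂μ with hS
  have hint : Jf + Jg ≤ 2 * S := by
    rw [hJf, hJg, hS, ← lintegral_add_left' (aux_meas p (x + z)) _,
      ← lintegral_const_mul' _ _ ENNReal.ofNat_ne_top]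
    exact lintegral_mono_ae hptwise
  have hpne : p ≠ 0 := ne_of_gt hp0
  -- Minkowski
  have hmink : S ^ (2/p) ≤ Jx ^ (2/p) + c * Jz ^ (2/p) := by
    have hq1 : (1:ℝ) ≤ p / 2 := by linarith
    have h := ENNReal.lintegral_Lp_add_le hAmeas hBmeas hq1
    rw [one_div_div] at h
    have eA : ∀ a, (A a) ^ (p/2) = (‖x a‖₊ : ℝ≥0∞) ^ p := fun a => by
      rw [hA, ← ENNReal.rpow_mul]
      congr 1
      ring
    have eB : ∀ a, (B a) ^ (p/2) = c ^ (p/2) * (‖z a‖₊ : ℝ≥0∞) ^ p := fun a => by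
      rw [hB, ENNReal.mul_rpow_of_nonneg _ _ (by positivity), ← ENNReal.rpow_mul]
      congr 2
      ring
    have eIA : (∫⁻ a, (A a) ^ (p/2) ∂μ) = Jx := lintegral_congr eA
    have eIB : (∫⁻ a, (B a) ^ (p/2) ∂μ) = c ^ (p/2) * Jz := by
      rw [lintegral_congr eB, lintegral_const_mul' _ _
        (ENNReal.rpow_ne_top_of_nonneg (by positivity) ENNReal.ofReal_ne_top)]
    rw [eIA, eIB] at h
    have ecc : (c ^ (p/2) * Jz) ^ (2/p) = c * Jz ^ (2/p) := by
      rw [ENNReal.mul_rpow_of_nonneg _ _ (by positivity), ← ENNReal.rpow_mul,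
        show p/2 * (2/p) = 1 by field_simp, ENNReal.rpow_one]
    rw [ecc] at h
    exact h
  have hhalf : (Jf + Jg) / 2 ≤ S := by
    calc (Jf + Jg) / 2 ≤ (2 * S) / 2 := ENNReal.div_le_div_right hint 2
      _ = S := by
          rw [mul_comm, mul_div_assoc, ENNReal.div_self (by norm_num) ENNReal.ofNat_ne_top, mul_one]
  have hfinE : ((Jf + Jg) / 2) ^ (2/p) ≤ Jx ^ (2/p) + c * Jz ^ (2/p) :=
    (ENNReal.rpow_le_rpow hhalf (by positivity)).trans hmink
  have hR : Jx ^ (2/p) + c * Jz ^ (2/p) ≠ ⊤ :=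
    ENNReal.add_ne_top.mpr ⟨ENNReal.rpow_ne_top_of_nonneg (by positivity) hxf,
      ENNReal.mul_ne_top ENNReal.ofReal_ne_top
        (ENNReal.rpow_ne_top_of_nonneg (by positivity) hzf)⟩
  have hreal := ENNReal.toReal_mono hR hfinE
  rw [ENNReal.toReal_add (ENNReal.rpow_ne_top_of_nonneg (by positivity) hxf)
      (ENNReal.mul_ne_top ENNReal.ofReal_ne_top
        (ENNReal.rpow_ne_top_of_nonneg (by positivity) hzf)),
    ENNReal.toReal_mul, ← ENNReal.toReal_rpow, ← ENNReal.toReal_rpow, ← ENNReal.toReal_rpow,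
    ENNReal.toReal_ofReal (by linarith : (0:ℝ) ≤ p - 1),
    ENNReal.toReal_div, ENNReal.toReal_add hf hg, ENNReal.toReal_ofNat] at hreal
  have epow : ∀ f : Lp ℝ (ENNReal.ofReal p) μ,
      (∫⁻ a, (‖f a‖₊ : ℝ≥0∞) ^ p ∂μ).toReal ^ (2/p) = ‖f‖ ^ 2 := by
    intro f
    obtain ⟨e, _⟩ := aux_norm_rpow hp1 f
    rw [← e, ← Real.rpow_mul (norm_nonneg f), show p * (2/p) = 2 by field_simp]
    rw [show (2:ℝ) = ((2:ℕ):ℝ) by norm_num, Real.rpow_natCast]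
  rw [epow x, epow z] at hreal
  rw [ef, eg]
  exact hreal

/-- Modulus of smoothness of `L_p`: for `2 ≤ p < ∞`, `η(L_p, w) ≤ (p-1)w²/2`, and for
`1 ≤ p ≤ 2`, `η(L_p, w) ≤ w^p/p`, where
`η(X,w) = sup_{‖x‖=‖y‖=1} [(‖x+wy‖+‖x-wy‖)/2 - 1]`. -/
theorem modulus_of_smoothness_Lp
    {Ω : Type*} [MeasurableSpace Ω] (μ : Measure Ω) (p : ℝ) (w : ℝ) (hw : 0 < w) :
    ((2 ≤ p) → ∀ x y : Lp ℝ (ENNReal.ofReal p) μ, ‖x‖ = 1 → ‖y‖ = 1 →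
      (‖x + w • y‖ + ‖x - w • y‖) / 2 - 1 ≤ (p - 1) * w ^ 2 / 2) ∧
    ((1 ≤ p) → (p ≤ 2) → ∀ x y : Lp ℝ (ENNReal.ofReal p) μ, ‖x‖ = 1 → ‖y‖ = 1 →
      (‖x + w • y‖ + ‖x - w • y‖) / 2 - 1 ≤ w ^ p / p) := by
  constructor
  · -- p ≥ 2
    intro hp x y hx hy
    have hp1 : (1:ℝ) ≤ p := by linarith
    have hp0 : (0:ℝ) < p := by linarith
    have hpne : p ≠ 0 := ne_of_gt hp0
    haveI : Fact (1 ≤ ENNReal.ofReal p) := ⟨by simpa using ENNReal.ofReal_le_ofReal hp1⟩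
    have hz : ‖w • y‖ = w := by
      rw [norm_smul, hy, mul_one, Real.norm_eq_abs, abs_of_pos hw]
    have key := aux_int_bcl hp x (w • y)
    rw [hx, hz] at key
    set A := ‖x + w • y‖ with hA
    set B := ‖x - w • y‖ with hB
    have hA0 : 0 ≤ A := norm_nonneg _
    have hB0 : 0 ≤ B := norm_nonneg _
    have pm : ((A + B)/2) ^ p ≤ (A ^ p + B ^ p)/2 :=
      aux_mean2 hA0 hB0 hp1
    have step : ((A + B)/2) ^ (2:ℝ) ≤ 1 + (p - 1) * w ^ 2 := by
      have h1 : ((A + B)/2) ^ (2:ℝ) = (((A + B)/2) ^ p) ^ (2/p) := by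
        rw [← Real.rpow_mul (by positivity), show p * (2/p) = 2 by field_simp]
      rw [h1]
      have h2 : (((A + B)/2) ^ p) ^ (2/p) ≤ ((A ^ p + B ^ p)/2) ^ (2/p) :=
        Real.rpow_le_rpow (by positivity) pm (by positivity)
      refine h2.trans ?_
      calc ((A ^ p + B ^ p)/2) ^ (2/p) ≤ (1:ℝ) ^ 2 + (p - 1) * w ^ 2 := key
        _ = 1 + (p - 1) * w ^ 2 := by norm_num
    have hs0 : (0:ℝ) ≤ (p - 1) * w ^ 2 := by nlinarith [sq_nonneg w]
    have final : (A + B)/2 ≤ 1 + (p - 1) * w ^ 2 / 2 := by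
      have e : (A + B)/2 = (((A + B)/2) ^ (2:ℝ)) ^ (1/2 : ℝ) := by
        rw [← Real.rpow_mul (by positivity)]
        norm_num
      rw [e]
      have h3 : (((A + B)/2) ^ (2:ℝ)) ^ (1/2:ℝ) ≤ (1 + (p - 1) * w ^ 2) ^ (1/2:ℝ) :=
        Real.rpow_le_rpow (by positivity) step (by norm_num)
      refine h3.trans ?_
      have hb := rpow_one_add_le_one_add_mul_self
        (by linarith : (-1:ℝ) ≤ (p - 1) * w ^ 2) (by norm_num : (0:ℝ) ≤ (1/2:ℝ))
        (by norm_num : (1/2:ℝ) ≤ 1)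
      linarith
    linarith
  · -- 1 ≤ p ≤ 2
    intro hp1 hp2 x y hx hy
    have hp0 : (0:ℝ) < p := by linarith
    have hpne : p ≠ 0 := ne_of_gt hp0
    haveI : Fact (1 ≤ ENNReal.ofReal p) := ⟨by simpa using ENNReal.ofReal_le_ofReal hp1⟩
    have hz : ‖w • y‖ = w := by
      rw [norm_smul, hy, mul_one, Real.norm_eq_abs, abs_of_pos hw]
    have key := aux_int_clarkson hp1 hp2 x (w • y)
    rw [hx, hz, Real.one_rpow] at key
    set A := ‖x + w • y‖ with hA
    set B := ‖x - w • y‖ with hB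
    have hA0 : 0 ≤ A := norm_nonneg _
    have hB0 : 0 ≤ B := norm_nonneg _
    have pm : ((A + B)/2) ^ p ≤ (A ^ p + B ^ p)/2 :=
      aux_mean2 hA0 hB0 hp1
    have step : ((A + B)/2) ^ p ≤ 1 + w ^ p := by linarith
    have final : (A + B)/2 ≤ 1 + w ^ p / p := by
      have e : (A + B)/2 = (((A + B)/2) ^ p) ^ (1/p : ℝ) := by
        rw [← Real.rpow_mul (by positivity), show p * (1/p) = 1 by field_simp, Real.rpow_one]
      rw [e]
      have h3 : (((A + B)/2) ^ p) ^ (1/p:ℝ) ≤ (1 + w ^ p) ^ (1/p:ℝ) :=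
        Real.rpow_le_rpow (by positivity) step (by positivity)
      refine h3.trans ?_
      have hb := rpow_one_add_le_one_add_mul_self
        (le_trans (by norm_num : (-1:ℝ) ≤ 0) (by positivity : (0:ℝ) ≤ w ^ p)) (by positivity : (0:ℝ) ≤ (1/p:ℝ))
        (by rw [div_le_one hp0]; linarith)
      have e2 : (1/p) * w ^ p = w ^ p / p := by ring
      linarith
    linarith
end
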